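/- There does not exist an odd order symmetric P tensor. Equivalently, if m >= 3 is odd and n >= 1, no symmetric tensor A in S_{m,n} satisfies: for every nonzero x in R^n, max_i x_i (A x^{m-1})_i > 0. -/
import Mathlib


open Finset

noncomputable section

/-- The contraction `(A x^{m})_i` of an order-`m+1` tensor with `m` copies of `x`. -/
def contrT {m n : ℕ} (A : (Fin (m+1) → Fin n) → ℝ) (x : Fin n → ℝ) (i : Fin n) : ℝ :=
  ∑ f : Fin m → Fin n, A (Fin.cons i f) * ∏ k, x (f k)

/-- `A x^M` for an order-`M` tensor. -/
def polyT {M n : ℕ} (A : (Fin M → Fin n) → ℝ) (x : Fin n → ℝ) : ℝ :=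
  ∑ f : Fin M → Fin n, A f * ∏ k, x (f k)

/-- P tensor: for every nonzero `x`, `max_i x_i (A x^{m-1})_i > 0`. -/
def IsPTensor {m n : ℕ} (A : (Fin (m+1) → Fin n) → ℝ) : Prop :=
  ∀ x : Fin n → ℝ, x ≠ 0 → ∃ i : Fin n, 0 < x i * contrT A x i

/-- P₀ tensor: for every nonzero `x` there is `i` with `x i ≠ 0` and `x_i (A x^{m-1})_i ≥ 0`. -/
def IsP0Tensor {m n : ℕ} (A : (Fin (m+1) → Fin n) → ℝ) : Prop :=
  ∀ x : Fin n → ℝ, x ≠ 0 → ∃ i : Fin n, x i ≠ 0 ∧ 0 ≤ x i * contrT A x i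

def infNorm {n : ℕ} (x : Fin n → ℝ) : ℝ := ⨆ i, |x i|

/-- The operator `T_A(x) = ‖x‖₂^{2-m} A x^{m-1}` (order of the tensor is `m+1`). -/
def TA {m n : ℕ} (A : (Fin (m+1) → Fin n) → ℝ) (x : Fin n → ℝ) (i : Fin n) : ℝ :=
  if x = 0 then 0
  else (Real.sqrt (∑ j, x j ^ 2)) ^ ((2 : ℤ) - ((m : ℤ) + 1)) * contrT A x i

/-- `α(T_A) = min_{‖x‖_∞ = 1} max_i x_i (T_A(x))_i`. -/
def alphaT {m n : ℕ} (A : (Fin (m+1) → Fin n) → ℝ) : ℝ :=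
  sInf ((fun x => ⨆ i, x i * TA A x i) '' {x : Fin n → ℝ | infNorm x = 1})

/-- B tensor of order `m+1`. -/
def IsBTensor {m n : ℕ} (B : (Fin (m+1) → Fin n) → ℝ) : Prop :=
  ∀ i : Fin n, (0 < ∑ f : Fin m → Fin n, B (Fin.cons i f)) ∧
    ∀ g : Fin m → Fin n, g ≠ (fun _ => i) →
      B (Fin.cons i g) < (1 / (n : ℝ) ^ m) * ∑ f : Fin m → Fin n, B (Fin.cons i f)

/-- B₀ tensor of order `m+1`. -/
def IsB0Tensor {m n : ℕ} (B : (Fin (m+1) → Fin n) → ℝ) : Prop :=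
  ∀ i : Fin n, (0 ≤ ∑ f : Fin m → Fin n, B (Fin.cons i f)) ∧
    ∀ g : Fin m → Fin n, g ≠ (fun _ => i) →
      B (Fin.cons i g) ≤ (1 / (n : ℝ) ^ m) * ∑ f : Fin m → Fin n, B (Fin.cons i f)

theorem stmt6 (m n : ℕ) (hm : Odd (m + 1)) (hm3 : 3 ≤ m + 1) (hn : 1 ≤ n)
    (A : (Fin (m+1) → Fin n) → ℝ)
    (hsym : ∀ (σ : Equiv.Perm (Fin (m+1))) (f : Fin (m+1) → Fin n), A (f ∘ σ) = A f) :
    ¬ IsPTensor A := by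
  intro hP
  have hj : (0:ℕ) < n := hn
  set j : Fin n := ⟨0, hj⟩ with hjdef
  set e : Fin n → ℝ := fun i => if i = j then 1 else 0 with he
  have hme : Even m := by
    rcases hm with ⟨k, hk⟩
    exact ⟨k, by omega⟩
  have key : ∀ (c : ℝ), c = 1 ∨ c = -1 → ∀ i,
      contrT A (fun t => c * e t) i = A (Fin.cons i (fun _ => j)) := by
    intro c hc i
    unfold contrT
    rw [Finset.sum_eq_single (fun _ : Fin m => j)]
    · have : ∀ k : Fin m, c * e ((fun _ : Fin m => j) k) = c := by
        intro k; simp [he]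
      rw [Finset.prod_congr rfl (fun k _ => this k), Finset.prod_const]
      have : c ^ (Finset.univ : Finset (Fin m)).card = 1 := by
        rcases hc with h | h
        · simp [h]
        · rw [h, Finset.card_univ, Fintype.card_fin]
          exact hme.neg_one_pow
      rw [this, mul_one]
    · intro f _ hf
      have : ∃ k, f k ≠ j := by
        by_contra hno
        push_neg at hno
        exact hf (funext hno)
      rcases this with ⟨k, hk⟩
      have : (∏ k, (fun t => c * e t) (f k)) = 0 := by
        apply Finset.prod_eq_zero (Finset.mem_univ k)
        simp [he, hk]
      rw [this, mul_zero]
    · intro h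
      exact absurd (Finset.mem_univ _) h
  -- apply P property to e
  have he0 : e ≠ 0 := by
    intro h
    have := congrFun h j
    simp [he] at this
  obtain ⟨i1, hi1⟩ := hP e he0
  have hc1 : contrT A e i1 = A (Fin.cons i1 (fun _ => j)) := by
    have := key 1 (Or.inl rfl) i1
    simpa using this
  have hi1j : i1 = j := by
    by_contra hne
    rw [show e i1 = 0 by simp [he, hne]] at hi1
    simp at hi1
  rw [hi1j] at hi1 hc1
  rw [hc1] at hi1
  have hpos : 0 < A (Fin.cons j (fun _ => j)) := by
    simpa [he] using hi1
  -- apply P property to -e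
  have hne0 : (fun t => (-1 : ℝ) * e t) ≠ 0 := by
    intro h
    have := congrFun h j
    simp [he] at this
  obtain ⟨i2, hi2⟩ := hP _ hne0
  have hc2 := key (-1) (Or.inr rfl) i2
  rw [hc2] at hi2
  have hi2j : i2 = j := by
    by_contra hne
    rw [show (-1 : ℝ) * e i2 = 0 by simp [he, hne]] at hi2
    simp at hi2
  rw [hi2j] at hi2
  have hneg : 0 < -A (Fin.cons j (fun _ => j)) := by
    simpa [he] using hi2
  linarith
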